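/- For $J$ sufficiently large, $f_J(1.1 J) > 1.1 J$, where $f_J(t)=\log(\cosh(J+t)/\cosh(t-J))$; consequently, the largest fixed point $t_J$ of $f_J$ satisfies $t_J > 1.1 J$ for all sufficiently large $J$, and $t_J - J \to \infty$ as $J \to \infty$. -/
import Mathlib


open Filter

lemma stmt15_lb (J : ℝ) (hJ : 1 ≤ J) :
    1.1 * J < Real.log (Real.cosh (J + 1.1 * J) / Real.cosh (1.1 * J - J)) := by
  rw [Real.log_div (Real.cosh_pos _).ne' (Real.cosh_pos _).ne']
  have hA : Real.exp (J + 1.1 * J) / 2 ≤ Real.cosh (J + 1.1 * J) := by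
    rw [Real.cosh_eq]
    nlinarith [Real.exp_pos (-(J + 1.1 * J))]
  have hB : Real.cosh (1.1 * J - J) ≤ Real.exp (1.1 * J - J) := by
    rw [Real.cosh_eq]
    nlinarith [Real.exp_le_exp.mpr (show -(1.1 * J - J) ≤ 1.1 * J - J by linarith)]
  have hlogA : (J + 1.1 * J) - Real.log 2 ≤ Real.log (Real.cosh (J + 1.1 * J)) := by
    have := Real.log_le_log (by positivity) hA
    rwa [Real.log_div (Real.exp_ne_zero _) two_ne_zero, Real.log_exp] at this
  have hlogB : Real.log (Real.cosh (1.1 * J - J)) ≤ 1.1 * J - J := by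
    have := Real.log_le_log (Real.cosh_pos _) hB
    rwa [Real.log_exp] at this
  have hlog2 : Real.log 2 < 0.9 := lt_of_lt_of_le Real.log_two_lt_d9 (by norm_num)
  linarith

lemma stmt15_ub (J s : ℝ) (hJ : 0 ≤ J) :
    Real.log (Real.cosh (J + s)) - Real.log (Real.cosh (s - J)) ≤ 2 * J := by
  have h1 : Real.cosh (J + s) ≤ Real.cosh (s - J) * Real.exp (2 * J) := by
    have e1 : J + s = (s - J) + 2 * J := by ring
    rw [e1, Real.cosh_add]
    have h2 : Real.sinh (s - J) ≤ Real.cosh (s - J) := by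
      nlinarith [Real.cosh_sub_sinh (s - J), Real.exp_pos (-(s - J))]
    have h3 : (0 : ℝ) ≤ Real.sinh (2 * J) := Real.sinh_nonneg_iff.mpr (by linarith)
    have h4 := Real.cosh_add_sinh (2 * J)
    nlinarith [Real.cosh_pos (s - J)]
  have h5 : Real.log (Real.cosh (J + s)) ≤
      Real.log (Real.cosh (s - J)) + 2 * J := by
    have := Real.log_le_log (Real.cosh_pos _) h1
    rwa [Real.log_mul (Real.cosh_pos _).ne' (Real.exp_ne_zero _), Real.log_exp] at this
  linarith

lemma stmt15_key (t : ℝ → ℝ)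
    (ht : ∀ J : ℝ, 1 ≤ J →
      IsGreatest {s : ℝ | Real.log (Real.cosh (J + s) / Real.cosh (s - J)) = s} (t J))
    (J : ℝ) (hJ : 1 ≤ J) : 1.1 * J < t J := by
  set h : ℝ → ℝ := fun s => Real.log (Real.cosh (J + s)) - Real.log (Real.cosh (s - J)) - s
    with hh
  have hc : Continuous h := by
    apply Continuous.sub
    apply Continuous.sub
    · exact (Real.continuous_cosh.comp (continuous_const.add continuous_id)).log
        (fun x => (Real.cosh_pos _).ne')
    · exact (Real.continuous_cosh.comp (continuous_id.sub continuous_const)).log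
        (fun x => (Real.cosh_pos _).ne')
    · exact continuous_id
  have hle : 1.1 * J ≤ 2 * J + 1 := by linarith
  have hpos : 0 < h (1.1 * J) := by
    have := stmt15_lb J hJ
    rw [Real.log_div (Real.cosh_pos _).ne' (Real.cosh_pos _).ne'] at this
    simp only [hh]
    linarith
  have hneg : h (2 * J + 1) < 0 := by
    have := stmt15_ub J (2 * J + 1) (by linarith)
    simp only [hh]
    linarith
  have hmem : (0 : ℝ) ∈ Set.Icc (h (2 * J + 1)) (h (1.1 * J)) :=
    ⟨le_of_lt hneg, le_of_lt hpos⟩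
  obtain ⟨s0, hs0mem, hs0⟩ := intermediate_value_Icc' hle hc.continuousOn hmem
  have hfix : Real.log (Real.cosh (J + s0) / Real.cosh (s0 - J)) = s0 := by
    rw [Real.log_div (Real.cosh_pos _).ne' (Real.cosh_pos _).ne']
    simp only [hh] at hs0
    linarith
  have hle2 : s0 ≤ t J := (ht J hJ).2 hfix
  have hne : s0 ≠ 1.1 * J := by
    intro heq
    rw [heq] at hs0
    linarith
  have : 1.1 * J < s0 := lt_of_le_of_ne hs0mem.1 (Ne.symm hne)
  linarith

theorem stmt_15 (t : ℝ → ℝ)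
    (ht : ∀ J : ℝ, 1 ≤ J →
      IsGreatest {s : ℝ | Real.log (Real.cosh (J + s) / Real.cosh (s - J)) = s} (t J)) :
    (∃ J0 : ℝ, ∀ J ≥ J0,
        1.1 * J < Real.log (Real.cosh (J + 1.1 * J) / Real.cosh (1.1 * J - J))) ∧
    (∃ J0 : ℝ, ∀ J ≥ J0, 1.1 * J < t J) ∧
    Tendsto (fun J => t J - J) atTop atTop := by
  refine ⟨⟨1, fun J hJ => stmt15_lb J hJ⟩, ⟨1, fun J hJ => stmt15_key t ht J hJ⟩, ?_⟩
  rw [tendsto_atTop]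
  intro b
  filter_upwards [eventually_ge_atTop (max 1 (10 * (b + 1)))] with J hJ
  have h1 : 1 ≤ J := le_trans (le_max_left _ _) hJ
  have h2 : 10 * (b + 1) ≤ J := le_trans (le_max_right _ _) hJ
  have h3 := stmt15_key t ht J h1
  linarith
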